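/- Let z be logistic-distributed (CDF sigm) and a ∈ ℝ, h = max(0, z + a). Then the conditional expectation E[h | h > 0] = softplus(a)/sigm(a). -/

import Mathlib

noncomputable def sigm (x : ℝ) : ℝ := (1 + Real.exp (-x))⁻¹

open Real MeasureTheory Filter Set Topology

lemma one_add_exp_pos (x : ℝ) : 0 < 1 + Real.exp x :=
  by positivity

lemma sigm_hasDerivAt (x : ℝ) : HasDerivAt sigm (sigm x * (1 - sigm x)) x := by
  have h : HasDerivAt (fun y : ℝ => 1 + Real.exp (-y)) (-Real.exp (-x)) x := by
    simpa using ((Real.hasDerivAt_exp (-x)).comp x ((hasDerivAt_id x).neg)).const_add 1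
  have h2 := h.inv (ne_of_gt (one_add_exp_pos (-x)))
  refine HasDerivAt.congr_deriv h2 ?_
  have hp := one_add_exp_pos (-x)
  simp only [sigm]
  field_simp [sigm]
  ring

lemma sigm_pos (x : ℝ) : 0 < sigm x := by
  unfold sigm; positivity

lemma sigm_lt_one (x : ℝ) : sigm x < 1 := by
  rw [sigm, inv_lt_one_iff₀]
  right
  linarith [Real.exp_pos (-x)]

lemma sigm_deriv_nonneg (x : ℝ) : 0 ≤ sigm x * (1 - sigm x) :=
  mul_nonneg (sigm_pos x).le (by linarith [sigm_lt_one x])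

lemma tendsto_sigm_atTop : Tendsto sigm atTop (𝓝 1) := by
  have : Tendsto (fun x : ℝ => 1 + Real.exp (-x)) atTop (𝓝 (1 + 0)) :=
    tendsto_const_nhds.add (Real.tendsto_exp_atBot.comp tendsto_neg_atTop_atBot)
  show Tendsto (fun x : ℝ => (1 + Real.exp (-x))⁻¹) atTop (𝓝 1)
  simpa [sigm] using (this.inv₀ (by norm_num))

lemma sigm_eq (x : ℝ) : sigm x = Real.exp x / (1 + Real.exp x) := by
  rw [sigm, Real.exp_neg]
  have h := Real.exp_pos x
  field_simp
  ring

/-- denominator value -/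
lemma denom_eq (a : ℝ) :
    (∫ z in Ioi (-a), sigm z * (1 - sigm z)) = sigm a := by
  rw [integral_Ioi_of_hasDerivAt_of_nonneg' (g := sigm)
    (fun x _ => sigm_hasDerivAt x) (fun x _ => sigm_deriv_nonneg x) tendsto_sigm_atTop]
  have h := Real.exp_pos a
  rw [sigm, sigm, Real.exp_neg]
  field_simp
  ring

noncomputable def F (a : ℝ) (z : ℝ) : ℝ := (z + a) * sigm z - Real.log (1 + Real.exp z)

lemma F_hasDerivAt (a z : ℝ) :
    HasDerivAt (F a) ((z + a) * (sigm z * (1 - sigm z))) z := by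
  have h1 : HasDerivAt (fun y : ℝ => (y + a) * sigm y)
      (1 * sigm z + (z + a) * (sigm z * (1 - sigm z))) z :=
    ((hasDerivAt_id z).add_const a).mul (sigm_hasDerivAt z)
  have h2 : HasDerivAt (fun y : ℝ => Real.log (1 + Real.exp y))
      (Real.exp z / (1 + Real.exp z)) z := by
    have he : HasDerivAt (fun y : ℝ => 1 + Real.exp y) (Real.exp z) z :=
      (Real.hasDerivAt_exp z).const_add 1
    simpa using he.log (ne_of_gt (one_add_exp_pos z))
  have := h1.sub h2
  refine HasDerivAt.congr_deriv this ?_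
  rw [← sigm_eq]
  ring

lemma F_tendsto (a : ℝ) : Tendsto (F a) atTop (𝓝 a) := by
  have key : ∀ z : ℝ, F a z
      = a * sigm z - (z * Real.exp (-z)) * (1 + Real.exp (-z))⁻¹
        - Real.log (1 + Real.exp (-z)) := by
    intro z
    have hp := one_add_exp_pos (-z)
    have hlog : Real.log (1 + Real.exp z) = z + Real.log (1 + Real.exp (-z)) := by
      have : (1 : ℝ) + Real.exp z = Real.exp z * (1 + Real.exp (-z)) := by
        rw [mul_add, mul_one, ← Real.exp_add]; simp; ring
      rw [this, Real.log_mul (Real.exp_ne_zero z) (ne_of_gt hp), Real.log_exp]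
    rw [F, hlog, sigm]
    field_simp
    ring
  have h1 : Tendsto (fun z : ℝ => Real.exp (-z)) atTop (𝓝 0) :=
    Real.tendsto_exp_atBot.comp tendsto_neg_atTop_atBot
  have hsig := tendsto_sigm_atTop
  have h2 : Tendsto (fun z : ℝ => z * Real.exp (-z)) atTop (𝓝 0) := by
    simpa using Real.tendsto_pow_mul_exp_neg_atTop_nhds_zero 1
  have h3 : Tendsto (fun z : ℝ => (1 + Real.exp (-z))⁻¹) atTop (𝓝 1) := by
    exact hsig
  have hadd : Tendsto (fun z : ℝ => 1 + Real.exp (-z)) atTop (𝓝 1) := by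
    have := tendsto_const_nhds.add h1 (f := fun z : ℝ => (1:ℝ))
    simpa using this
  have h4 : Tendsto (fun z : ℝ => Real.log (1 + Real.exp (-z))) atTop (𝓝 0) := by
    have := (Real.continuousAt_log (x := (1:ℝ)) (by norm_num)).tendsto.comp hadd
    simpa [Function.comp_def] using this
  have final : Tendsto (fun z : ℝ => a * sigm z - z * Real.exp (-z) * (1 + Real.exp (-z))⁻¹
      - Real.log (1 + Real.exp (-z))) atTop (𝓝 (a * 1 - 0 * 1 - 0)) :=
    ((tendsto_const_nhds.mul hsig).sub (h2.mul h3)).sub h4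
  simp only [mul_one, zero_mul, sub_zero, mul_zero] at final
  exact Tendsto.congr (fun z => (key z).symm) final

lemma numer_Ioi (a : ℝ) :
    (∫ z in Ioi (-a), (z + a) * (sigm z * (1 - sigm z))) = Real.log (1 + Real.exp a) := by
  rw [integral_Ioi_of_hasDerivAt_of_nonneg' (g := F a)
    (fun x _ => F_hasDerivAt a x)
    (fun x hx => mul_nonneg (by simp at hx; linarith) (sigm_deriv_nonneg x))
    (F_tendsto a)]
  have hp := one_add_exp_pos a
  have hp' := one_add_exp_pos (-a)
  have hlog : Real.log (1 + Real.exp a) = a + Real.log (1 + Real.exp (-a)) := by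
    have : (1 : ℝ) + Real.exp a = Real.exp a * (1 + Real.exp (-a)) := by
      rw [mul_add, mul_one, ← Real.exp_add]; simp; ring
    rw [this, Real.log_mul (Real.exp_ne_zero a) (ne_of_gt hp'), Real.log_exp]
  rw [F, hlog]
  ring

lemma integrableOn_numer (a : ℝ) :
    IntegrableOn (fun z => (z + a) * (sigm z * (1 - sigm z))) (Ioi (-a)) := by
  exact integrableOn_Ioi_deriv_of_nonneg' (fun x _ => F_hasDerivAt a x)
    (fun x hx => mul_nonneg (by simp at hx; linarith) (sigm_deriv_nonneg x))
    (F_tendsto a)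

/-- For logistic noise `z` and `h = max 0 (z + a)`, the conditional expectation
`E[h | h > 0] = E[h]/P(h > 0)` equals `softplus a / sigm a`. -/
theorem noisy_rectifier_conditional_expectation (a : ℝ) :
    (∫ z : ℝ, max 0 (z + a) * (sigm z * (1 - sigm z)))
      / (∫ z in {z : ℝ | 0 < max 0 (z + a)}, sigm z * (1 - sigm z))
      = Real.log (1 + Real.exp a) / sigm a := by
  have hset : {z : ℝ | 0 < max 0 (z + a)} = Ioi (-a) := by
    ext z
    simp [lt_max_iff, Ioi]
    constructor
    · rintro h; linarith
    · intro h; linarith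
  have hIic : ∀ z ∈ Iic (-a), max 0 (z + a) * (sigm z * (1 - sigm z)) = 0 := by
    intro z hz
    simp only [Iic, mem_setOf_eq] at hz
    have : max 0 (z + a) = 0 := max_eq_left (by linarith)
    rw [this, zero_mul]
  have hIoi : ∀ z ∈ Ioi (-a),
      max 0 (z + a) * (sigm z * (1 - sigm z)) = (z + a) * (sigm z * (1 - sigm z)) := by
    intro z hz
    simp only [Ioi, mem_setOf_eq] at hz
    rw [max_eq_right (by linarith)]
  have hInt1 : IntegrableOn (fun z => max 0 (z + a) * (sigm z * (1 - sigm z))) (Iic (-a)) := by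
    apply (integrableOn_congr_fun (fun z hz => (hIic z hz)) measurableSet_Iic).mpr
    exact integrableOn_zero
  have hInt2 : IntegrableOn (fun z => max 0 (z + a) * (sigm z * (1 - sigm z))) (Ioi (-a)) := by
    apply (integrableOn_congr_fun hIoi measurableSet_Ioi).mpr
    exact integrableOn_numer a
  have hnum : (∫ z : ℝ, max 0 (z + a) * (sigm z * (1 - sigm z)))
      = Real.log (1 + Real.exp a) := by
    rw [← intervalIntegral.integral_Iic_add_Ioi (b := -a) hInt1 hInt2]
    rw [setIntegral_congr_fun measurableSet_Iic hIic,
        setIntegral_congr_fun measurableSet_Ioi hIoi]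
    simpa using numer_Ioi a
  rw [hset, hnum, denom_eq a]
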